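/- Let θ be a primitive p-th root of unity and set ϑ_i = 1/(θ^i − 1) for i = 1,…,p−1. Then (x+1)^p − x^p = p·∏_{i=1}^{p−1}(x − ϑ_i). Moreover ϑ_i − ϑ_j ∉ Z for i ≠ j (in particular ϑ_i − ϑ_j ≠ 0, 1), and ϑ_i ∉ Z for all i. -/

import Mathlib

open Polynomial

/-- The real part of `1/(z-1)` is `-1/2` when `|z| = 1` and `z ≠ 1`. -/
lemma re_one_div_sub_one {z : ℂ} (hz : Complex.normSq z = 1) (hz1 : z ≠ 1) :
    (1 / (z - 1)).re = -(1 / 2) := by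
  have hre : z.re ≠ 1 := by
    intro h
    apply hz1
    have hsq : z.re * z.re + z.im * z.im = 1 := by
      rw [← Complex.normSq_apply, hz]
    have him : z.im = 0 := by nlinarith
    apply Complex.ext <;> simp [h, him]
  have hnorm : Complex.normSq (z - 1) = 2 - 2 * z.re := by
    have hsq : z.re * z.re + z.im * z.im = 1 := by
      rw [← Complex.normSq_apply, hz]
    simp only [Complex.normSq_apply, Complex.sub_re, Complex.sub_im, Complex.one_re,
      Complex.one_im]
    ring_nf
    linarith
  rw [one_div, Complex.inv_re, hnorm]
  have hden : (2 : ℝ) - 2 * z.re ≠ 0 := by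
    intro h; apply hre; linarith
  rw [div_eq_iff hden]
  simp only [Complex.sub_re, Complex.one_re]
  ring

theorem primitive_root_factorization (p : ℕ) (hp : 2 ≤ p) (θ : ℂ)
    (hθ : IsPrimitiveRoot θ p) :
    ((Polynomial.X + 1 : Polynomial ℂ) ^ p - Polynomial.X ^ p
        = Polynomial.C (p : ℂ) *
          ∏ i ∈ Finset.Icc 1 (p - 1), (Polynomial.X - Polynomial.C (1 / (θ ^ i - 1))))
    ∧ (∀ i ∈ Finset.Icc 1 (p - 1), ∀ j ∈ Finset.Icc 1 (p - 1), i ≠ j →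
        ∀ n : ℤ, 1 / (θ ^ i - 1) - 1 / (θ ^ j - 1) ≠ (n : ℂ))
    ∧ (∀ i ∈ Finset.Icc 1 (p - 1), ∀ n : ℤ, 1 / (θ ^ i - 1) ≠ (n : ℂ)) := by
  have hppos : 0 < p := by omega
  -- θ^i ≠ 1 for i in Icc 1 (p-1)
  have hne1 : ∀ i ∈ Finset.Icc 1 (p - 1), θ ^ i ≠ 1 := by
    intro i hi
    rw [Finset.mem_Icc] at hi
    exact hθ.pow_ne_one_of_pos_of_lt (by omega) (by omega)
  have hne0 : ∀ i ∈ Finset.Icc 1 (p - 1), θ ^ i - 1 ≠ 0 := by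
    intro i hi h
    exact hne1 i hi (by linear_combination h)
  -- normSq (θ^i) = 1
  have hsq : ∀ i, Complex.normSq (θ ^ i) = 1 := by
    intro i
    have h : (θ ^ i) ^ p = 1 := by
      rw [← pow_mul, mul_comm, pow_mul, hθ.pow_eq_one, one_pow]
    have h2 : Complex.normSq (θ ^ i) ^ p = 1 := by
      rw [← map_pow, h, map_one]
    have h3 := Complex.normSq_nonneg (θ ^ i)
    rcases (pow_eq_one_iff_cases).mp h2 with h4 | h4 | h4
    · omega
    · exact h4
    · linarith [h4.1]
  -- real part of ϑ_i is -1/2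
  have hre : ∀ i ∈ Finset.Icc 1 (p - 1), (1 / (θ ^ i - 1)).re = -(1 / 2) := by
    intro i hi
    exact re_one_div_sub_one (hsq i) (hne1 i hi)
  refine ⟨?_, ?_, ?_⟩
  · -- the polynomial factorization
    -- scalar root-of-unity identity
    have hpow : ∀ y : ℂ, y ^ p - 1 = ∏ i ∈ Finset.range p, (y - θ ^ i) := by
      intro y
      have h := X_pow_sub_C_eq_prod hθ hppos (one_pow p)
      have h2 := congrArg (Polynomial.eval y) h
      simpa [Polynomial.eval_prod] using h2
    -- the product of (1 - θ^(k+1)) over range (p-1) is p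
    have hprodp : ∏ k ∈ Finset.range (p - 1), (1 - θ ^ (k + 1)) = (p : ℂ) := by
      obtain ⟨q, rfl⟩ : ∃ q, p = q + 1 := ⟨p - 1, by omega⟩
      have := hθ.prod_one_sub_pow_eq_order
      simpa using this
    -- scalar identity for x ≠ 0
    have key : ∀ x : ℂ, x ≠ 0 →
        (x + 1) ^ p - x ^ p
          = (p : ℂ) * ∏ i ∈ Finset.Icc 1 (p - 1), (x - 1 / (θ ^ i - 1)) := by
      intro x hx
      have h1 : ∏ i ∈ Finset.range p, ((x + 1) - θ ^ i * x) = (x + 1) ^ p - x ^ p := by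
        have step : ∀ i ∈ Finset.range p, (x + 1) - θ ^ i * x = x * ((x + 1) / x - θ ^ i) := by
          intro i _
          field_simp
        rw [Finset.prod_congr rfl step, Finset.prod_mul_distrib, Finset.prod_const,
          Finset.card_range, ← hpow ((x + 1) / x)]
        rw [div_pow, mul_sub, mul_one, mul_div_cancel₀ _ (pow_ne_zero p hx)]
      have h2 : ∏ i ∈ Finset.range p, ((x + 1) - θ ^ i * x)
          = ∏ k ∈ Finset.range (p - 1), ((x + 1) - θ ^ (k + 1) * x) := by
        obtain ⟨q, hq⟩ : ∃ q, p = q + 1 := ⟨p - 1, by omega⟩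
        subst hq
        rw [Finset.prod_range_succ']
        simp
      have h3 : ∏ k ∈ Finset.range (p - 1), ((x + 1) - θ ^ (k + 1) * x)
          = (∏ k ∈ Finset.range (p - 1), (1 - θ ^ (k + 1)))
            * ∏ k ∈ Finset.range (p - 1), (x - 1 / (θ ^ (k + 1) - 1)) := by
        rw [← Finset.prod_mul_distrib]
        refine Finset.prod_congr rfl fun k hk => ?_
        rw [Finset.mem_range] at hk
        have hk' : θ ^ (k + 1) - 1 ≠ 0 :=
          hne0 (k + 1) (Finset.mem_Icc.mpr ⟨by omega, by omega⟩)
        field_simp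
        ring
      have h4 : ∏ i ∈ Finset.Icc 1 (p - 1), (x - 1 / (θ ^ i - 1))
          = ∏ k ∈ Finset.range (p - 1), (x - 1 / (θ ^ (k + 1) - 1)) := by
        rw [← Finset.Ico_add_one_right_eq_Icc, Finset.prod_Ico_eq_prod_range]
        refine Finset.prod_congr (by congr 1 <;> omega) fun k _ => by rw [add_comm 1 k]
      rw [h4, ← h1, h2, h3, hprodp]
    -- upgrade to a polynomial identity
    apply Polynomial.eq_of_infinite_eval_eq
    apply Set.Infinite.mono (s := {x : ℂ | x ≠ 0})
    · intro x hx
      have := key x hx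
      simp only [Set.mem_setOf_eq, eval_sub, eval_pow, eval_add, eval_X, eval_one, eval_mul,
        eval_C, eval_prod]
      simpa using this
    · exact Set.Finite.infinite_compl (Set.finite_singleton (0 : ℂ))
  · -- differences are not integers
    intro i hi j hj hij n h
    have hren := congrArg Complex.re h
    rw [Complex.sub_re, hre i hi, hre j hj, Complex.intCast_re] at hren
    have hn0 : n = 0 := by
      have : (n : ℝ) = 0 := by linarith
      exact_mod_cast this
    rw [hn0] at h
    push_cast at h
    have heq : 1 / (θ ^ i - 1) = 1 / (θ ^ j - 1) := by linear_combination h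
    rw [one_div, one_div, inv_inj] at heq
    have hpow : θ ^ i = θ ^ j := by linear_combination heq
    rw [Finset.mem_Icc] at hi hj
    exact hij (hθ.pow_inj (by omega) (by omega) hpow)
  · -- ϑ_i is not an integer
    intro i hi n h
    have hren := congrArg Complex.re h
    rw [hre i hi, Complex.intCast_re] at hren
    have : (2 * n : ℤ) = -1 := by
      have : 2 * (n : ℝ) = -1 := by linarith
      exact_mod_cast this
    omega
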